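/- The probability p_0 = 3·∫_0^1 ∫_0^1 (1-a)^3/(3 - (1-a)(2-b)) db da equals (189/8)·ln 3 - 26·ln 2 - 15/2. -/

import Mathlib

open MeasureTheory Real

noncomputable def stitF (a : ℝ) : ℝ :=
  (9 - (1 - a) ^ 3 / 3) * Real.log (2 + a) + ((1 - a) ^ 3 / 3 - 9 / 8) * Real.log (1 + 2 * a)
    + (-191 / 16 - 11 / 4 * a + a ^ 2 / 4)

lemma stitF_hasDerivAt {a : ℝ} (h1 : 0 ≤ a) (h2 : a ≤ 1) :
    HasDerivAt stitF ((1 - a) ^ 2 * (Real.log (2 + a) - Real.log (1 + 2 * a))) a := by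
  have h2a : (0:ℝ) < 2 + a := by linarith
  have h12 : (0:ℝ) < 1 + 2 * a := by linarith
  have hone : HasDerivAt (fun x : ℝ => 1 - x) (-1) a := (hasDerivAt_id a).const_sub 1
  have hcube : HasDerivAt (fun x : ℝ => (1 - x) ^ 3) (3 * (1 - a) ^ 2 * (-1)) a := hone.pow 3
  have l1 : HasDerivAt (fun x : ℝ => Real.log (2 + x)) (1 / (2 + a)) a := by
    have h := (Real.hasDerivAt_log h2a.ne').comp a ((hasDerivAt_id a).const_add 2)
    simpa [one_div, Function.comp_def] using h
  have l2 : HasDerivAt (fun x : ℝ => Real.log (1 + 2 * x)) (2 / (1 + 2 * a)) a := by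
    have hin : HasDerivAt (fun x : ℝ => 1 + 2 * x) 2 a := by
      simpa using ((hasDerivAt_id a).const_mul 2).const_add 1
    have h := (Real.hasDerivAt_log h12.ne').comp a hin
    simpa [div_eq_inv_mul, Function.comp_def] using h
  have p1 : HasDerivAt (fun x : ℝ => 9 - (1 - x) ^ 3 / 3) (-(3 * (1 - a) ^ 2 * (-1) / 3)) a :=
    (hcube.div_const 3).const_sub 9
  have p2 : HasDerivAt (fun x : ℝ => (1 - x) ^ 3 / 3 - 9 / 8) (3 * (1 - a) ^ 2 * (-1) / 3) a :=
    (hcube.div_const 3).sub_const (9 / 8)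
  have p3 : HasDerivAt (fun x : ℝ => -191 / 16 - 11 / 4 * x + x ^ 2 / 4)
      (-(11 / 4) + 2 * a / 4) a := by
    have := (((hasDerivAt_id a).const_mul (11 / 4)).const_sub (-191 / 16)).add
      (((hasDerivAt_id a).pow 2).div_const 4)
    simpa [pow_one, Pi.add_def] using this
  have H := ((p1.mul l1).add (p2.mul l2)).add p3
  convert H using 1
  · rfl
  · rfl
  · rfl
  field_simp
  ring

lemma stit_inner {a : ℝ} (h1 : 0 ≤ a) (h2 : a ≤ 1) :
    (∫ b in (0:ℝ)..1, (1 - a) ^ 3 / (3 - (1 - a) * (2 - b)))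
      = (1 - a) ^ 2 * (Real.log (2 + a) - Real.log (1 + 2 * a)) := by
  have hpos : ∀ b ∈ Set.uIcc (0:ℝ) 1, 0 < 3 - (1 - a) * (2 - b) := by
    intro b hb
    rw [Set.uIcc_of_le (by norm_num)] at hb
    obtain ⟨hb0, hb1⟩ := hb
    nlinarith
  have key : ∀ b ∈ Set.uIcc (0:ℝ) 1,
      HasDerivAt (fun b : ℝ => (1 - a) ^ 2 * Real.log (3 - (1 - a) * (2 - b)))
        ((1 - a) ^ 3 / (3 - (1 - a) * (2 - b))) b := by
    intro b hb
    have hp := hpos b hb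
    have hin : HasDerivAt (fun x : ℝ => 3 - (1 - a) * (2 - x)) (1 - a) b := by
      have := (((hasDerivAt_id b).const_sub 2).const_mul (1 - a)).const_sub 3
      simpa using this
    have hlog := (Real.hasDerivAt_log hp.ne').comp b hin
    have := hlog.const_mul ((1 - a) ^ 2)
    convert this using 1
    · rfl
    · rfl
    · rfl
    field_simp
  have hint : IntervalIntegrable (fun b : ℝ => (1 - a) ^ 3 / (3 - (1 - a) * (2 - b)))
      volume 0 1 := by
    apply ContinuousOn.intervalIntegrable
    apply ContinuousOn.div continuousOn_const
    · exact (continuousOn_const.sub (continuousOn_const.mul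
        (continuousOn_const.sub continuousOn_id)))
    · intro b hb
      exact (hpos b hb).ne'
  rw [intervalIntegral.integral_eq_sub_of_hasDerivAt key hint]
  have e1 : 3 - (1 - a) * (2 - 1) = 2 + a := by ring
  have e2 : 3 - (1 - a) * (2 - 0) = 1 + 2 * a := by ring
  rw [e1, e2]
  ring

theorem stit_p0_value :
    3 * (∫ a in (0:ℝ)..1, ∫ b in (0:ℝ)..1, (1 - a) ^ 3 / (3 - (1 - a) * (2 - b))) =
      (189 / 8) * Real.log 3 - 26 * Real.log 2 - 15 / 2 := by
  have hcongr : (∫ a in (0:ℝ)..1, ∫ b in (0:ℝ)..1, (1 - a) ^ 3 / (3 - (1 - a) * (2 - b)))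
      = ∫ a in (0:ℝ)..1, (1 - a) ^ 2 * (Real.log (2 + a) - Real.log (1 + 2 * a)) := by
    apply intervalIntegral.integral_congr
    intro a ha
    rw [Set.uIcc_of_le (by norm_num : (0:ℝ) ≤ 1)] at ha
    exact stit_inner ha.1 ha.2
  rw [hcongr]
  have hderiv : ∀ a ∈ Set.uIcc (0:ℝ) 1, HasDerivAt stitF
      ((1 - a) ^ 2 * (Real.log (2 + a) - Real.log (1 + 2 * a))) a := by
    intro a ha
    rw [Set.uIcc_of_le (by norm_num)] at ha
    exact stitF_hasDerivAt ha.1 ha.2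
  have hint : IntervalIntegrable
      (fun a : ℝ => (1 - a) ^ 2 * (Real.log (2 + a) - Real.log (1 + 2 * a))) volume 0 1 := by
    apply ContinuousOn.intervalIntegrable
    apply ContinuousOn.mul
    · exact (continuousOn_const.sub continuousOn_id).pow 2
    · apply ContinuousOn.sub
      · apply ContinuousOn.log (continuousOn_const.add continuousOn_id)
        intro a ha
        rw [Set.uIcc_of_le (by norm_num : (0:ℝ) ≤ 1)] at ha
        simp only [Pi.add_apply, Pi.mul_apply, id_eq]
        nlinarith [ha.1]
      · apply ContinuousOn.log (continuousOn_const.add (continuousOn_const.mul continuousOn_id))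
        intro a ha
        rw [Set.uIcc_of_le (by norm_num : (0:ℝ) ≤ 1)] at ha
        simp only [Pi.add_apply, Pi.mul_apply, id_eq]
        nlinarith [ha.1]
  rw [intervalIntegral.integral_eq_sub_of_hasDerivAt hderiv hint]
  have : stitF 1 - stitF 0 = (63 / 8) * Real.log 3 - (26 / 3) * Real.log 2 - 5 / 2 := by
    unfold stitF
    norm_num [Real.log_one]
    ring
  rw [this]
  ring
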